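/- The Takagi function maps rational numbers in [0,1] to rational numbers. -/

import Mathlib

open scoped BigOperators

/-- Distance from a real number to the nearest integer. -/
noncomputable def nearestDist (t : ℝ) : ℝ := |t - round t|

/-- The Takagi function. -/
noncomputable def takagi (x : ℝ) : ℝ := ∑' n : ℕ, (1 / 2 ^ n) * nearestDist (2 ^ n * x)

/-- Partial Takagi function of level `n`. -/
noncomputable def takagiPartial (n : ℕ) (x : ℝ) : ℝ :=
  ∑ j ∈ Finset.range n, (1 / 2 ^ j) * nearestDist (2 ^ j * x)

/-- The symmetric tent map. -/
noncomputable def tent (x : ℝ) : ℝ := if x ≤ 1 / 2 then 2 * x else 2 - 2 * x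

lemma nearestDist_add_int (t : ℝ) (z : ℤ) : nearestDist (t + z) = nearestDist t := by
  unfold nearestDist
  rw [round_add_intCast]
  push_cast
  congr 1
  ring

lemma nearestDist_rat (x : ℚ) : nearestDist (x : ℝ) = ((|x - round x| : ℚ) : ℝ) := by
  unfold nearestDist
  rw [Rat.round_cast]
  push_cast
  ring_nf

lemma takagi_summable (x : ℝ) :
    Summable (fun n : ℕ => (1 / 2 ^ n : ℝ) * nearestDist (2 ^ n * x)) := by
  refine Summable.of_nonneg_of_le (fun n => ?_) (fun n => ?_)
    (summable_geometric_of_lt_one (r := 1/2) (by norm_num) (by norm_num))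
  · exact mul_nonneg (by positivity) (abs_nonneg _)
  · have h1 : nearestDist (2 ^ n * x) ≤ 1 :=
      le_trans (abs_sub_round _) (by norm_num)
    calc (1 / 2 ^ n : ℝ) * nearestDist (2 ^ n * x) ≤ (1 / 2 ^ n : ℝ) * 1 := by
          exact mul_le_mul_of_nonneg_left h1 (by positivity)
      _ = (1 / 2 : ℝ) ^ n := by rw [mul_one, one_div, one_div, inv_pow]

theorem takagi_rational (q : ℚ) (hq : q ∈ Set.Icc (0:ℚ) 1) :
    ∃ r : ℚ, takagi (q : ℝ) = (r : ℝ) := by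
  -- the real and rational term sequences
  set g : ℕ → ℝ := fun k => (1 / 2 ^ k : ℝ) * nearestDist (2 ^ k * (q : ℝ)) with hg
  set gq : ℕ → ℚ := fun k => (1 / 2 ^ k : ℚ) * |2 ^ k * q - round ((2 : ℚ) ^ k * q)| with hgqdef
  have hgq : ∀ k, g k = (gq k : ℝ) := by
    intro k
    have hc : (2 : ℝ) ^ k * q = (((2 : ℚ) ^ k * q : ℚ) : ℝ) := by push_cast; ring
    simp only [hg, hgqdef]
    rw [hc, nearestDist_rat]
    push_cast
    ring
  have hsum : Summable g := takagi_summable q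
  -- pigeonhole: find m < n with 2^m q ≡ 2^n q mod 1
  haveI : NeZero q.den := ⟨q.den_nz⟩
  obtain ⟨a, b, hab, hfab⟩ :=
    Finite.exists_ne_map_eq_of_infinite (fun k : ℕ => ((2 ^ k * q.num : ℤ) : ZMod q.den))
  obtain ⟨m, n, hmn, hf⟩ : ∃ m n, m < n ∧
      ((2 ^ m * q.num : ℤ) : ZMod q.den) = ((2 ^ n * q.num : ℤ) : ZMod q.den) := by
    rcases hab.lt_or_gt with h | h
    · exact ⟨a, b, h, hfab⟩
    · exact ⟨b, a, h, hfab.symm⟩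
  have hdvd : (q.den : ℤ) ∣ 2 ^ n * q.num - 2 ^ m * q.num :=
    Int.ModEq.dvd ((ZMod.intCast_eq_intCast_iff _ _ _).mp hf)
  obtain ⟨z, hz⟩ := hdvd
  set N := m
  set p := n - m with hpdef
  have hp : 0 < p := Nat.sub_pos_of_lt hmn
  have hpN : p + N = n := Nat.sub_add_cancel hmn.le
  -- the integer shift relation over ℚ, then ℝ
  have hden : (q.den : ℚ) ≠ 0 := by exact_mod_cast q.den_nz
  have hmul : (q : ℚ) * q.den = q.num := Rat.mul_den_eq_num q
  have hzQ : (2 : ℚ) ^ n * q.num - 2 ^ m * q.num = q.den * z := by exact_mod_cast hz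
  have hQ : (2 : ℚ) ^ n * q - 2 ^ m * q = z := by
    apply mul_right_cancel₀ hden
    linear_combination hzQ + ((2 : ℚ) ^ n - 2 ^ m) * hmul
  have hzR : (2 : ℝ) ^ (p + N) * q - 2 ^ N * q = (z : ℝ) := by
    rw [hpN]
    exact_mod_cast hQ
  -- periodicity of the distances
  have hnd : ∀ k : ℕ, nearestDist (2 ^ (k + p + N) * (q : ℝ)) =
      nearestDist (2 ^ (k + N) * (q : ℝ)) := by
    intro k
    have h2 : (2 : ℝ) ^ (k + p + N) * q = 2 ^ (k + N) * q + ((2 ^ k * z : ℤ) : ℝ) := by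
      push_cast
      linear_combination (2 : ℝ) ^ k * hzR
    rw [h2, nearestDist_add_int]
  have hgper : ∀ k : ℕ, g (k + p + N) = (1 / 2 ^ p) * g (k + N) := by
    intro k
    simp only [hg]
    rw [hnd k, pow_add, pow_add, pow_add]
    ring
  -- split the tsum
  have hsumN : Summable fun k => g (k + N) := (summable_nat_add_iff N).mpr hsum
  have hsplit1 : ∑ i ∈ Finset.range N, g i + ∑' k, g (k + N) = ∑' k, g k :=
    Summable.sum_add_tsum_nat_add N hsum
  have hsplit2 : ∑ j ∈ Finset.range p, g (j + N) + ∑' k, g (k + p + N) = ∑' k, g (k + N) :=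
    Summable.sum_add_tsum_nat_add p hsumN
  have htail : ∑' k, g (k + p + N) = (1 / 2 ^ p) * ∑' k, g (k + N) := by
    simp_rw [hgper]
    exact tsum_mul_left
  set S : ℝ := ∑' k, g (k + N) with hS
  set P : ℝ := ∑ j ∈ Finset.range p, g (j + N) with hP
  have hSeq : P + (1 / 2 ^ p) * S = S := by rw [← htail]; exact hsplit2
  have h2p : (1 - (1 / 2 ^ p : ℝ)) ≠ 0 := by
    have : (1 / 2 ^ p : ℝ) < 1 := by
      rw [div_lt_one (by positivity)]
      exact one_lt_pow₀ (by norm_num) hp.ne'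
    linarith
  have hSval : S = P / (1 - 1 / 2 ^ p) := by
    rw [eq_div_iff h2p]
    linear_combination -hSeq
  -- the rational witness
  refine ⟨∑ i ∈ Finset.range N, gq i +
      (∑ j ∈ Finset.range p, gq (j + N)) / (1 - 1 / 2 ^ p), ?_⟩
  have hPq : P = ((∑ j ∈ Finset.range p, gq (j + N) : ℚ) : ℝ) := by
    rw [hP]
    push_cast
    exact Finset.sum_congr rfl fun j _ => hgq (j + N)
  have hSumq : ∑ i ∈ Finset.range N, g i = ((∑ i ∈ Finset.range N, gq i : ℚ) : ℝ) := by
    push_cast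
    exact Finset.sum_congr rfl fun i _ => hgq i
  have htak : takagi (q : ℝ) = ∑' k, g k := rfl
  rw [← hsplit1] at htak
  rw [htak, hSval, hPq, hSumq]
  push_cast
  ring
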